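/- Let V• be a bounded cochain complex of finite-dimensional complex inner product spaces, with Laplacian Δ_i = d_{i−1}d_{i−1}^* + d_i^*d_i on V_i. Then V_i decomposes orthogonally as V_i = ker(Δ_i) ⊕ im(d_{i−1}) ⊕ im(d_i^*), and ker(Δ_i) = ker(d_i) ∩ ker(d_{i−1}^*). -/

import Mathlib

/-!
STATEMENT 17: Finite-dimensional Hodge theory: for a bounded cochain
complex `V•` of finite-dimensional complex inner product spaces with
Laplacian `Δ_i = d_{i−1} d_{i−1}^* + d_i^* d_i`, one has the orthogonal
decomposition `V_i = ker(Δ_i) ⊕ im(d_{i−1}) ⊕ im(d_i^*)` and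
`ker(Δ_i) = ker(d_i) ∩ ker(d_{i−1}^*)`.

(Stated at degree `i+1` for every `i`; orthogonality of the
decomposition is expressed by the summands being pairwise orthogonal
with join the whole space.)
-/

open LinearMap Submodule

lemma ker_adj_eq {E F : Type} [NormedAddCommGroup E] [InnerProductSpace ℂ E]
    [NormedAddCommGroup F] [InnerProductSpace ℂ F] [FiniteDimensional ℂ E]
    [FiniteDimensional ℂ F] (A : E →ₗ[ℂ] F) :
    LinearMap.ker (LinearMap.adjoint A) = (LinearMap.range A)ᗮ := by
  ext x
  simp only [mem_ker, Submodule.mem_orthogonal]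
  constructor
  · rintro h u ⟨y, rfl⟩
    rw [← LinearMap.adjoint_inner_right, h, inner_zero_right]
  · intro h
    have := h (A (LinearMap.adjoint A x)) ⟨_, rfl⟩
    rwa [← LinearMap.adjoint_inner_right, inner_self_eq_zero] at this

set_option maxHeartbeats 1000000 in
theorem stmt_17 (V : ℕ → Type)
    [∀ i, NormedAddCommGroup (V i)] [∀ i, InnerProductSpace ℂ (V i)]
    [∀ i, FiniteDimensional ℂ (V i)]
    (d : ∀ i, V i →ₗ[ℂ] V (i + 1))
    (hdd : ∀ i, (d (i + 1)) ∘ₗ (d i) = 0)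
    (N : ℕ) (hN : ∀ i, N < i → Subsingleton (V i)) (i : ℕ) :
    ∀ Δ : V (i + 1) →ₗ[ℂ] V (i + 1),
      Δ = (d i) ∘ₗ (LinearMap.adjoint (d i)) +
            (LinearMap.adjoint (d (i + 1))) ∘ₗ (d (i + 1)) →
      LinearMap.ker Δ =
          LinearMap.ker (d (i + 1)) ⊓ LinearMap.ker (LinearMap.adjoint (d i)) ∧
      LinearMap.ker Δ ⊔ LinearMap.range (d i) ⊔
          LinearMap.range (LinearMap.adjoint (d (i + 1))) = ⊤ ∧
      LinearMap.ker Δ ≤ (LinearMap.range (d i))ᗮ ∧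
      LinearMap.ker Δ ≤ (LinearMap.range (LinearMap.adjoint (d (i + 1))))ᗮ ∧
      LinearMap.range (d i) ≤ (LinearMap.range (LinearMap.adjoint (d (i + 1))))ᗮ := by
  intro Δ hΔ
  set A := d i with hA
  set B := d (i + 1) with hB
  -- key: ker Δ = ker B ⊓ ker A*
  have hker : LinearMap.ker Δ = LinearMap.ker B ⊓ LinearMap.ker (LinearMap.adjoint A) := by
    ext x
    simp only [mem_ker, Submodule.mem_inf]
    constructor
    · intro hx
      have h0 : inner ℂ (Δ x) x = (0 : ℂ) := by rw [hx, inner_zero_left]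
      rw [hΔ] at h0
      simp only [LinearMap.add_apply, LinearMap.comp_apply, inner_add_left] at h0
      rw [LinearMap.adjoint_inner_left] at h0
      rw [show (inner ℂ (A ((LinearMap.adjoint A) x)) x : ℂ)
            = inner ℂ ((LinearMap.adjoint A) x) ((LinearMap.adjoint A) x) from
          (LinearMap.adjoint_inner_right A _ x).symm] at h0
      rw [inner_self_eq_norm_sq_to_K, inner_self_eq_norm_sq_to_K] at h0
      have key : ∀ a b : ℝ, (a : ℂ) ^ 2 + (b : ℂ) ^ 2 = 0 → a = 0 ∧ b = 0 := by
        intro a b h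
        rw [← Complex.ofReal_pow, ← Complex.ofReal_pow, ← Complex.ofReal_add,
          Complex.ofReal_eq_zero] at h
        constructor <;> nlinarith [sq_nonneg a, sq_nonneg b]
      obtain ⟨h1, h2⟩ := key _ _ h0
      exact ⟨norm_eq_zero.mp h2, norm_eq_zero.mp h1⟩
    · rintro ⟨h1, h2⟩
      have e : Δ x = A ((LinearMap.adjoint A) x) + (LinearMap.adjoint B) (B x) := by
        rw [hΔ]; rfl
      rw [e, h1, h2, map_zero, map_zero, add_zero]
  have hkA : LinearMap.ker (LinearMap.adjoint A) = (LinearMap.range A)ᗮ := ker_adj_eq A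
  have hkB : LinearMap.ker B = (LinearMap.range (LinearMap.adjoint B))ᗮ := by
    have := ker_adj_eq (LinearMap.adjoint B)
    rwa [LinearMap.adjoint_adjoint] at this
  have hort : LinearMap.range A ≤ (LinearMap.range (LinearMap.adjoint B))ᗮ := by
    rintro u ⟨y, rfl⟩
    intro v hv
    obtain ⟨z, rfl⟩ := hv
    rw [LinearMap.adjoint_inner_left]
    have : B (A y) = 0 := by
      have := congrFun (congrArg DFunLike.coe (hdd i)) y
      simpa using this
    rw [this, inner_zero_right]
  refine ⟨hker, ?_, ?_, ?_, hort⟩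
  · -- join = ⊤
    rw [hker, hkA, hkB, Submodule.inf_orthogonal]
    rw [sup_comm (LinearMap.range (LinearMap.adjoint B)) (LinearMap.range A)] at *
    rw [sup_assoc, sup_comm, Submodule.sup_orthogonal_of_hasOrthogonalProjection]
  · rw [hker]; exact fun x hx => by rw [hkA] at hx; exact hx.2
  · rw [hker]; exact fun x hx => by rw [hkB] at hx; exact hx.1
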